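/- For all real numbers a, b ∈ [0, 2/3], the inequality (1−a)(1−b) + (1/2)·((1−a)·b + a·(1−b)) + (1/3)·a·b ≥ 13/27 holds. -/
import Mathlib

theorem stmt8 (a b : ℝ) (ha : a ∈ Set.Icc (0 : ℝ) (2 / 3)) (hb : b ∈ Set.Icc (0 : ℝ) (2 / 3)) :
    (13 : ℝ) / 27 ≤
      (1 - a) * (1 - b) + (1 / 2) * ((1 - a) * b + a * (1 - b)) + (1 / 3) * (a * b) := by
  obtain ⟨ha0, ha1⟩ := ha
  obtain ⟨hb0, hb1⟩ := hb
  nlinarith [mul_nonneg (sub_nonneg.2 ha1) (sub_nonneg.2 hb1), mul_nonneg ha0 hb0]
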